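/- For the projective inversion X^i = x^ix^j∂_j on ℝⁿ, the difference between the adjoint action on differential operators from λ- to μ-densities (pulled back through normal ordering) and the action L^δ on symbols of degree k, restricted to symbols homogeneous of degree k in p, equals ℓ_{k-1}(λ)·∂_{p_i}, where ℓ_k(λ) = -(k + λ(n+1)) and δ = μ - λ. -/

import Mathlib

open MvPolynomial

noncomputable section

/-- Polynomial symbols: polynomial functions on `T*ℝⁿ`; `Sum.inl` are the `x` variables,
`Sum.inr` the fiber variables `p`. -/
abbrev PolySym (n : ℕ) := MvPolynomial (Fin n ⊕ Fin n) ℝ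

/-- Polynomial functions on `ℝⁿ` (densities are identified with these). -/
abbrev PolyDen (n : ℕ) := MvPolynomial (Fin n) ℝ

/-- Polynomial vector fields on `ℝⁿ`, given by their components. -/
abbrev PolyVF (n : ℕ) := Fin n → PolyDen n

/-- `∂/∂x^i` on symbols. -/
def dxOp (n : ℕ) (i : Fin n) : Module.End ℝ (PolySym n) := (pderiv (Sum.inl i)).toLinearMap

/-- `∂/∂p_i` on symbols. -/
def dpOp (n : ℕ) (i : Fin n) : Module.End ℝ (PolySym n) := (pderiv (Sum.inr i)).toLinearMap

/-- Multiplication by a symbol. -/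
def mulOp (n : ℕ) (q : PolySym n) : Module.End ℝ (PolySym n) := LinearMap.mulLeft ℝ q

/-- The symbol `x^i`. -/
def xVar (n : ℕ) (i : Fin n) : PolySym n := X (Sum.inl i)

/-- The symbol `p_i`. -/
def pVar (n : ℕ) (i : Fin n) : PolySym n := X (Sum.inr i)

/-- A polynomial in `x` viewed as a symbol. -/
def liftX (n : ℕ) (f : PolyDen n) : PolySym n := rename Sum.inl f

/-- Divergence of a vector field. -/
def divVF (n : ℕ) (Xf : PolyVF n) : PolyDen n := ∑ i, pderiv i (Xf i)

/-- Weight function computing the degree in the `p` variables. -/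
def pwt (n : ℕ) : Fin n ⊕ Fin n → ℕ := Sum.elim (fun _ => 0) (fun _ => 1)

/-- Homogeneity of degree `k` in the fiber variables `p`. -/
def IsPHomog (n : ℕ) (P : PolySym n) (k : ℕ) : Prop := IsWeightedHomogeneous (pwt n) P k

/-- The weight-`δ` action `L^δ_X = X^i ∂_{x^i} - p_j (∂_{x^i} X^j) ∂_{p_i} + δ Div(X)` of a
vector field on symbols. -/
def Lop (n : ℕ) (δ : ℝ) (Xf : PolyVF n) : Module.End ℝ (PolySym n) :=
  (∑ i, mulOp n (liftX n (Xf i)) ∘ₗ dxOp n i)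
    - (∑ i, ∑ j, mulOp n (pVar n j * liftX n (pderiv i (Xf j))) ∘ₗ dpOp n i)
    + δ • mulOp n (liftX n (divVF n Xf))

/-- The action `ℓ^λ_X = X + λ Div(X)` of a vector field on `λ`-densities. -/
def ellOp (n : ℕ) (lam : ℝ) (Xf : PolyVF n) : Module.End ℝ (PolyDen n) :=
  (∑ i, LinearMap.mulLeft ℝ (Xf i) ∘ₗ (pderiv i).toLinearMap)
    + lam • LinearMap.mulLeft ℝ (divVF n Xf)

/-- Lie bracket of polynomial vector fields. -/
def bracketVF (n : ℕ) (Xf Yf : PolyVF n) : PolyVF n :=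
  fun i => ∑ j, (Xf j * pderiv j (Yf i) - Yf j * pderiv j (Xf i))
/-- The projective inversion `X^i = x^i x^j ∂_j`. -/
def projVF (n : ℕ) (i : Fin n) : PolyVF n := fun j => X i * X j

/-- The divergence operator `D = ∂_{x^i} ∂_{p_i}` on symbols. -/
def divOp (n : ℕ) : Module.End ℝ (PolySym n) := ∑ i, dxOp n i ∘ₗ dpOp n i

/-- Generators of the projective algebra `sl_{n+1}`: affine vector fields together with the
projective inversions. -/
def projGenSet (n : ℕ) : Set (PolyVF n) :=
  {Xf | ∀ i, (Xf i).totalDegree ≤ 1} ∪ Set.range (projVF n)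
/-- Exponents of the `x`-part of a symbol monomial. -/
def xExp (n : ℕ) (m : (Fin n ⊕ Fin n) →₀ ℕ) : Fin n →₀ ℕ :=
  Finsupp.comapDomain Sum.inl m Sum.inl_injective.injOn

/-- Exponents of the `p`-part of a symbol monomial. -/
def pExp (n : ℕ) (m : (Fin n ⊕ Fin n) →₀ ℕ) : Fin n →₀ ℕ :=
  Finsupp.comapDomain Sum.inr m Sum.inr_injective.injOn

/-- The iterated partial derivative `∂^b f` of a polynomial on `ℝⁿ`. -/
def derivMulti (n : ℕ) (b : Fin n →₀ ℕ) (f : PolyDen n) : PolyDen n :=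
  ∑ c ∈ f.support, (f.coeff c * ∏ i, (Nat.descFactorial (c i) (b i) : ℝ)) • monomial (c - b) 1

/-- Normal ordering: the differential operator associated to a symbol, sending the monomial
`x^a p^b` to the operator `x^a ∂^b`. -/
def Nord (n : ℕ) (P : PolySym n) (f : PolyDen n) : PolyDen n :=
  ∑ m ∈ P.support, P.coeff m • (monomial (xExp n m) 1 * derivMulti n (pExp n m) f)
section Aux

open Finsupp

lemma desc_succ_left (c b : ℕ) :
    c.descFactorial (b + 1) = c * (c - 1).descFactorial b := by
  cases c with
  | zero => simp [Nat.zero_descFactorial_succ]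
  | succ m => rw [Nat.succ_descFactorial_succ]; simp

variable {n : ℕ}

lemma xExp_apply (m : (Fin n ⊕ Fin n) →₀ ℕ) (j : Fin n) : xExp n m j = m (Sum.inl j) := rfl
lemma pExp_apply (m : (Fin n ⊕ Fin n) →₀ ℕ) (j : Fin n) : pExp n m j = m (Sum.inr j) := rfl

lemma xExp_add (m m' : (Fin n ⊕ Fin n) →₀ ℕ) : xExp n (m + m') = xExp n m + xExp n m' := by
  ext j; simp [xExp_apply]
lemma pExp_add (m m' : (Fin n ⊕ Fin n) →₀ ℕ) : pExp n (m + m') = pExp n m + pExp n m' := by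
  ext j; simp [pExp_apply]
lemma xExp_tsub (m m' : (Fin n ⊕ Fin n) →₀ ℕ) : xExp n (m - m') = xExp n m - xExp n m' := by
  ext j; simp [xExp_apply, Finsupp.tsub_apply]
lemma pExp_tsub (m m' : (Fin n ⊕ Fin n) →₀ ℕ) : pExp n (m - m') = pExp n m - pExp n m' := by
  ext j; simp [pExp_apply, Finsupp.tsub_apply]

lemma xExp_single_inl (j : Fin n) (e : ℕ) :
    xExp n (Finsupp.single (Sum.inl j) e) = Finsupp.single j e := by
  ext a; simp [xExp_apply, Finsupp.single_apply, Sum.inl.injEq]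
lemma xExp_single_inr (j : Fin n) (e : ℕ) :
    xExp n (Finsupp.single (Sum.inr j) e) = 0 := by
  ext a; simp [xExp_apply, Finsupp.single_apply]
lemma pExp_single_inr (j : Fin n) (e : ℕ) :
    pExp n (Finsupp.single (Sum.inr j) e) = Finsupp.single j e := by
  ext a; simp [pExp_apply, Finsupp.single_apply, Sum.inr.injEq]
lemma pExp_single_inl (j : Fin n) (e : ℕ) :
    pExp n (Finsupp.single (Sum.inl j) e) = 0 := by
  ext a; simp [pExp_apply, Finsupp.single_apply]

lemma derivMulti_monomial (b c : Fin n →₀ ℕ) (r : ℝ) :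
    derivMulti n b (monomial c r)
      = (∏ i, (Nat.descFactorial (c i) (b i) : ℝ)) • monomial (c - b) r := by
  classical
  rcases eq_or_ne r 0 with rfl | hr
  · simp [derivMulti, support_monomial]
  · rw [derivMulti, support_monomial, if_neg hr, Finset.sum_singleton, coeff_monomial, if_pos rfl,
      smul_monomial, smul_monomial]
    congr 1
    simp [smul_eq_mul, mul_comm]

lemma derivMulti_eq_of_subset {b : Fin n →₀ ℕ} {f : PolyDen n} {S : Finset (Fin n →₀ ℕ)}
    (hS : f.support ⊆ S) :
    derivMulti n b f
      = ∑ c ∈ S, (f.coeff c * ∏ i, (Nat.descFactorial (c i) (b i) : ℝ)) • monomial (c - b) 1 := by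
  rw [derivMulti]
  exact Finset.sum_subset hS (fun c _ hc => by
    rw [MvPolynomial.notMem_support_iff.mp hc, zero_mul, zero_smul])

lemma derivMulti_add (b : Fin n →₀ ℕ) (f g : PolyDen n) :
    derivMulti n b (f + g) = derivMulti n b f + derivMulti n b g := by
  classical
  rw [derivMulti_eq_of_subset (f := f + g) (S := f.support ∪ g.support)
      MvPolynomial.support_add,
    derivMulti_eq_of_subset (f := f) (S := f.support ∪ g.support) Finset.subset_union_left,
    derivMulti_eq_of_subset (f := g) (S := f.support ∪ g.support) Finset.subset_union_right,
    ← Finset.sum_add_distrib]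
  refine Finset.sum_congr rfl fun c _ => ?_
  rw [MvPolynomial.coeff_add, add_mul, add_smul]

lemma derivMulti_smul (b : Fin n →₀ ℕ) (a : ℝ) (f : PolyDen n) :
    derivMulti n b (a • f) = a • derivMulti n b f := by
  classical
  rw [derivMulti_eq_of_subset (f := a • f) (S := f.support) MvPolynomial.support_smul,
    derivMulti, Finset.smul_sum]
  refine Finset.sum_congr rfl fun c _ => ?_
  rw [MvPolynomial.coeff_smul, smul_eq_mul, mul_assoc, mul_smul]

/-- `derivMulti` as a linear map. -/
def derivMultiL (n : ℕ) (b : Fin n →₀ ℕ) : Module.End ℝ (PolyDen n) where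
  toFun := derivMulti n b
  map_add' := derivMulti_add b
  map_smul' := fun a f => derivMulti_smul b a f

@[simp] lemma derivMultiL_apply (b : Fin n →₀ ℕ) (f : PolyDen n) :
    derivMultiL n b f = derivMulti n b f := rfl

lemma derivMulti_zero_idx (f : PolyDen n) : derivMulti n 0 f = f := by
  induction f using MvPolynomial.induction_on' with
  | monomial c r => simp [derivMulti_monomial]
  | add p q hp hq => rw [derivMulti_add, hp, hq]

end Aux
section Aux2

variable {n : ℕ}

lemma prod_desc_succ (b c : Fin n →₀ ℕ) (j : Fin n) :
    (∏ i, Nat.descFactorial (c i) (b i + Finsupp.single j 1 i))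
      = c j * ∏ i, Nat.descFactorial (c i - Finsupp.single j 1 i) (b i) := by
  classical
  rw [← Finset.mul_prod_erase _ _ (Finset.mem_univ j),
    ← Finset.mul_prod_erase _ (fun i => Nat.descFactorial (c i - Finsupp.single j 1 i) (b i))
      (Finset.mem_univ j)]
  have h1 : ∀ i ∈ Finset.univ.erase j,
      Nat.descFactorial (c i) (b i + Finsupp.single j 1 i)
        = Nat.descFactorial (c i - Finsupp.single j 1 i) (b i) := by
    intro i hi
    have hij : i ≠ j := (Finset.mem_erase.mp hi).1
    simp [Finsupp.single_apply, Ne.symm hij]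
  rw [Finset.prod_congr rfl h1]
  rw [Finsupp.single_eq_same, desc_succ_left, mul_assoc]

lemma prod_desc_pderiv (b c : Fin n →₀ ℕ) (j : Fin n) :
    (c j - b j) * ∏ i, Nat.descFactorial (c i) (b i)
      = c j * ∏ i, Nat.descFactorial (c i - Finsupp.single j 1 i) (b i) := by
  classical
  rw [← Finset.mul_prod_erase _ _ (Finset.mem_univ j),
    ← Finset.mul_prod_erase _ (fun i => Nat.descFactorial (c i - Finsupp.single j 1 i) (b i))
      (Finset.mem_univ j)]
  have h1 : ∀ i ∈ Finset.univ.erase j,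
      Nat.descFactorial (c i) (b i)
        = Nat.descFactorial (c i - Finsupp.single j 1 i) (b i) := by
    intro i hi
    have hij : i ≠ j := (Finset.mem_erase.mp hi).1
    simp [Finsupp.single_apply, Ne.symm hij]
  rw [Finset.prod_congr rfl h1]
  rw [Finsupp.single_eq_same, ← mul_assoc, ← mul_assoc, ← Nat.descFactorial_succ, desc_succ_left]

lemma derivMulti_add_single (b : Fin n →₀ ℕ) (j : Fin n) (f : PolyDen n) :
    derivMulti n (b + Finsupp.single j 1) f = derivMulti n b (pderiv j f) := by
  induction f using MvPolynomial.induction_on' with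
  | add p q hp hq => rw [map_add, derivMulti_add, derivMulti_add, hp, hq]
  | monomial c r =>
    rw [pderiv_monomial, derivMulti_monomial, derivMulti_monomial]
    have he : c - (b + Finsupp.single j 1) = c - Finsupp.single j 1 - b := by
      rw [tsub_tsub, add_comm]
    rw [he, smul_monomial, smul_monomial]
    congr 1
    simp only [Finsupp.coe_add, Finsupp.coe_tsub, Pi.add_apply, Pi.sub_apply, smul_eq_mul]
    have h := congrArg (fun t : ℕ => (t : ℝ)) (prod_desc_succ b c j)
    push_cast at h
    linear_combination r * h

lemma pderiv_derivMulti (b : Fin n →₀ ℕ) (j : Fin n) (f : PolyDen n) :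
    pderiv j (derivMulti n b f) = derivMulti n b (pderiv j f) := by
  induction f using MvPolynomial.induction_on' with
  | add p q hp hq => rw [derivMulti_add, map_add, map_add, derivMulti_add, hp, hq]
  | monomial c r =>
    rw [derivMulti_monomial, smul_monomial, pderiv_monomial, pderiv_monomial,
      derivMulti_monomial, smul_monomial]
    have he : c - b - Finsupp.single j 1 = c - Finsupp.single j 1 - b := by
      rw [tsub_tsub, tsub_tsub, add_comm]
    rw [he]
    congr 1
    simp only [Finsupp.coe_tsub, Pi.sub_apply, smul_eq_mul]
    have h := congrArg (fun t : ℕ => (t : ℝ)) (prod_desc_pderiv b c j)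
    push_cast at h
    linear_combination r * h

lemma derivMulti_X_mul (b : Fin n →₀ ℕ) (j : Fin n) (f : PolyDen n) :
    derivMulti n b (X j * f)
      = X j * derivMulti n b f + ((b j : ℝ)) • derivMulti n (b - Finsupp.single j 1) f := by
  classical
  suffices H : ∀ (N : ℕ) (b : Fin n →₀ ℕ), (∑ i, b i) = N → ∀ f : PolyDen n,
      derivMulti n b (X j * f)
        = X j * derivMulti n b f + ((b j : ℝ)) • derivMulti n (b - Finsupp.single j 1) f from
    H _ b rfl f
  intro N
  induction N with
  | zero =>
    intro b hb f
    have hb0 : b = 0 := by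
      ext i
      have := Finset.sum_eq_zero_iff.mp hb i (Finset.mem_univ i)
      simpa using this
    subst hb0
    simp [derivMulti_zero_idx]
  | succ N ih =>
    intro b hb f
    have hex : ∃ l, b l ≠ 0 := by
      by_contra h
      push_neg at h
      simp [h] at hb
    obtain ⟨l, hl⟩ := hex
    set b' : Fin n →₀ ℕ := b - Finsupp.single l 1 with hb'
    have hbe : b = b' + Finsupp.single l 1 := by
      ext a
      simp only [hb', Finsupp.add_apply, Finsupp.tsub_apply, Finsupp.single_apply]
      split_ifs with h
      · subst h; omega
      · omega
    have hsum : (∑ i, b' i) = N := by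
      have h1 : ∀ a, b a = b' a + (Finsupp.single l 1) a := fun a => by rw [hbe]; simp
      have hsb : (∑ i, b i) = (∑ i, b' i) + 1 := by
        rw [Finset.sum_congr rfl (fun a _ => h1 a), Finset.sum_add_distrib]
        simp [Finsupp.single_apply]
      omega
    rw [hbe, derivMulti_add_single, derivMulti_add_single]
    rcases eq_or_ne j l with rfl | hjl
    · -- j = l
      rw [pderiv_mul, pderiv_X_self, one_mul]
      rw [derivMulti_add, ih b' hsum (pderiv j f)]
      have hcan : b' + Finsupp.single j 1 - Finsupp.single j 1 = b' :=
        add_tsub_cancel_right _ _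
      rw [hcan]
      have happ : ((b' + Finsupp.single j 1 : Fin n →₀ ℕ)) j = b' j + 1 := by simp
      rw [happ]
      rcases eq_or_ne (b' j) 0 with hz | hz
      · rw [hz]
        push_cast
        simp only [zero_smul, add_zero, zero_add, one_smul]
        abel
      · have hcan2 : b' - Finsupp.single j 1 + Finsupp.single j 1 = b' := by
          ext a
          simp only [Finsupp.add_apply, Finsupp.tsub_apply, Finsupp.single_apply]
          split_ifs with h
          · subst h; omega
          · omega
        have hD : derivMulti n (b' - Finsupp.single j 1) (pderiv j f) = derivMulti n b' f := by
          rw [← derivMulti_add_single, hcan2]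
        rw [hD]
        push_cast
        rw [add_smul, one_smul]
        abel
    · -- j ≠ l
      rw [pderiv_mul, pderiv_X_of_ne hjl, zero_mul, zero_add]
      rw [ih b' hsum (pderiv l f)]
      have h2 : b' + Finsupp.single l 1 - Finsupp.single j 1
          = b' - Finsupp.single j 1 + Finsupp.single l 1 := by
        ext a
        simp only [Finsupp.add_apply, Finsupp.tsub_apply, Finsupp.single_apply]
        split_ifs with ha hb'' <;> omega
      rw [h2, derivMulti_add_single]
      have h3 : ((b' + Finsupp.single l 1 : Fin n →₀ ℕ)) j = b' j := by
        simp [Finsupp.single_apply, Ne.symm hjl]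
      rw [h3]

end Aux2
section Aux3

variable {n : ℕ}

lemma X_mul_monomial'' {σ : Type*} (u : σ) (m : σ →₀ ℕ) (r : ℝ) :
    (X u : MvPolynomial σ ℝ) * monomial m r = monomial (Finsupp.single u 1 + m) r := by
  rw [monomial_single_add, pow_one]

lemma dpOp_apply (j : Fin n) (P : PolySym n) : dpOp n j P = pderiv (Sum.inr j) P := rfl
lemma dxOp_apply (j : Fin n) (P : PolySym n) : dxOp n j P = pderiv (Sum.inl j) P := rfl

lemma Nord_eq_of_subset {P : PolySym n} {f : PolyDen n} {S : Finset ((Fin n ⊕ Fin n) →₀ ℕ)}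
    (hS : P.support ⊆ S) :
    Nord n P f = ∑ m ∈ S, P.coeff m • (monomial (xExp n m) 1 * derivMulti n (pExp n m) f) := by
  rw [Nord]
  exact Finset.sum_subset hS (fun m _ hm => by
    rw [MvPolynomial.notMem_support_iff.mp hm, zero_smul])

lemma Nord_add_left (P Q : PolySym n) (f : PolyDen n) :
    Nord n (P + Q) f = Nord n P f + Nord n Q f := by
  classical
  rw [Nord_eq_of_subset (P := P + Q) (S := P.support ∪ Q.support) MvPolynomial.support_add,
    Nord_eq_of_subset (P := P) (S := P.support ∪ Q.support) Finset.subset_union_left,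
    Nord_eq_of_subset (P := Q) (S := P.support ∪ Q.support) Finset.subset_union_right,
    ← Finset.sum_add_distrib]
  refine Finset.sum_congr rfl fun m _ => ?_
  rw [MvPolynomial.coeff_add, add_smul]

lemma Nord_smul_left (a : ℝ) (P : PolySym n) (f : PolyDen n) :
    Nord n (a • P) f = a • Nord n P f := by
  classical
  rw [Nord_eq_of_subset (P := a • P) (S := P.support) MvPolynomial.support_smul,
    Nord, Finset.smul_sum]
  refine Finset.sum_congr rfl fun m _ => ?_
  rw [MvPolynomial.coeff_smul, smul_eq_mul, mul_smul]

/-- `Nord` as a linear map in the symbol argument. -/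
def NordLM (n : ℕ) (f : PolyDen n) : PolySym n →ₗ[ℝ] PolyDen n where
  toFun := fun P => Nord n P f
  map_add' := fun P Q => Nord_add_left P Q f
  map_smul' := fun a P => Nord_smul_left a P f

@[simp] lemma NordLM_apply (f : PolyDen n) (P : PolySym n) : NordLM n f P = Nord n P f := rfl

lemma Nord_monomial (m : (Fin n ⊕ Fin n) →₀ ℕ) (r : ℝ) (f : PolyDen n) :
    Nord n (monomial m r) f = r • (monomial (xExp n m) 1 * derivMulti n (pExp n m) f) := by
  classical
  rcases eq_or_ne r 0 with rfl | hr
  · simp [Nord, support_monomial]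
  · rw [Nord, support_monomial, if_neg hr, Finset.sum_singleton, coeff_monomial, if_pos rfl]

lemma Nord_add_right (P : PolySym n) (f g : PolyDen n) :
    Nord n P (f + g) = Nord n P f + Nord n P g := by
  rw [Nord, Nord, Nord, ← Finset.sum_add_distrib]
  refine Finset.sum_congr rfl fun m _ => ?_
  rw [derivMulti_add, mul_add, smul_add]

lemma Nord_smul_right (P : PolySym n) (a : ℝ) (f : PolyDen n) :
    Nord n P (a • f) = a • Nord n P f := by
  rw [Nord, Nord, Finset.smul_sum]
  refine Finset.sum_congr rfl fun m _ => ?_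
  rw [derivMulti_smul, smul_comm]
  congr 1
  rw [mul_smul_comm]

/-- `Nord` as a linear map in the function argument. -/
def NordRM (n : ℕ) (P : PolySym n) : PolyDen n →ₗ[ℝ] PolyDen n where
  toFun := fun f => Nord n P f
  map_add' := fun f g => Nord_add_right P f g
  map_smul' := fun a f => Nord_smul_right P a f

@[simp] lemma NordRM_apply (P : PolySym n) (f : PolyDen n) : NordRM n P f = Nord n P f := rfl

/-- Rule A : multiplication by `x^j` on the left. -/
lemma Nord_xVar_mul (j : Fin n) (P : PolySym n) (f : PolyDen n) :
    Nord n (xVar n j * P) f = X j * Nord n P f := by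
  induction P using MvPolynomial.induction_on' with
  | add p q hp hq => rw [mul_add, Nord_add_left, Nord_add_left, hp, hq, mul_add]
  | monomial m r =>
    rw [xVar, X_mul_monomial'', Nord_monomial, Nord_monomial, xExp_add, pExp_add,
      xExp_single_inl, pExp_single_inl, zero_add, mul_smul_comm]
    congr 1
    rw [← mul_assoc, ← X_mul_monomial'']

/-- Rule B : `N(P)(∂_j f) = N(p_j P) f`. -/
lemma Nord_pderiv_right (j : Fin n) (P : PolySym n) (f : PolyDen n) :
    Nord n P (pderiv j f) = Nord n (pVar n j * P) f := by
  induction P using MvPolynomial.induction_on' with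
  | add p q hp hq => rw [Nord_add_left, mul_add, Nord_add_left, hp, hq]
  | monomial m r =>
    rw [pVar, X_mul_monomial'', Nord_monomial, Nord_monomial, xExp_add, pExp_add,
      xExp_single_inr, pExp_single_inr, zero_add, add_comm (Finsupp.single j 1),
      derivMulti_add_single]

/-- Rule C : `N(P)(x_j f) = N(x_j P) f + N(∂_{p_j} P) f`. -/
lemma Nord_X_mul_right (j : Fin n) (P : PolySym n) (f : PolyDen n) :
    Nord n P (X j * f) = Nord n (xVar n j * P + dpOp n j P) f := by
  induction P using MvPolynomial.induction_on' with
  | add p q hp hq =>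
    rw [Nord_add_left, hp, hq, ← Nord_add_left]
    congr 1
    rw [mul_add, map_add]
    abel
  | monomial m r =>
    rw [Nord_add_left, Nord_monomial, derivMulti_X_mul, mul_add, smul_add]
    congr 1
    · rw [Nord_xVar_mul, Nord_monomial, mul_smul_comm]
      congr 1
      ring
    · have hd : dpOp n j (monomial m r)
          = monomial (m - Finsupp.single (Sum.inr j) 1) (r * m (Sum.inr j)) := by
        rw [dpOp_apply, pderiv_monomial]
      rw [hd, Nord_monomial, xExp_tsub, xExp_single_inr, tsub_zero, pExp_tsub, pExp_single_inr,
        mul_smul_comm, smul_smul]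
      rfl

/-- Rule D : `∂_j (N(P) f) = N(p_j P) f + N(∂_{x_j} P) f`. -/
lemma pderiv_Nord (j : Fin n) (P : PolySym n) (f : PolyDen n) :
    pderiv j (Nord n P f) = Nord n (pVar n j * P + dxOp n j P) f := by
  induction P using MvPolynomial.induction_on' with
  | add p q hp hq =>
    rw [Nord_add_left, map_add, hp, hq, ← Nord_add_left]
    congr 1
    rw [mul_add, map_add]
    abel
  | monomial m r =>
    have h1 : Nord n (pVar n j * monomial m r) f
        = r • (monomial (xExp n m) 1 * derivMulti n (pExp n m + Finsupp.single j 1) f) := by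
      rw [pVar, X_mul_monomial'', Nord_monomial, xExp_add, pExp_add, xExp_single_inr,
        pExp_single_inr, zero_add, add_comm (Finsupp.single j 1)]
    have hd : dxOp n j (monomial m r)
        = monomial (m - Finsupp.single (Sum.inl j) 1) (r * m (Sum.inl j)) := by
      rw [dxOp_apply, pderiv_monomial]
    have h2 : Nord n (dxOp n j (monomial m r)) f
        = (r * (m (Sum.inl j) : ℝ)) • (monomial (xExp n m - Finsupp.single j 1) 1
            * derivMulti n (pExp n m) f) := by
      rw [hd, Nord_monomial, xExp_tsub, pExp_tsub, xExp_single_inl, pExp_single_inl, tsub_zero]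
    have hsm : pderiv j (Nord n (monomial m r) f)
        = r • pderiv j (monomial (xExp n m) 1 * derivMulti n (pExp n m) f) := by
      rw [Nord_monomial, smul_eq_C_mul, smul_eq_C_mul, pderiv_C_mul]
    rw [Nord_add_left, h1, h2, hsm, pderiv_mul, pderiv_derivMulti, ← derivMulti_add_single,
      pderiv_monomial, smul_add, add_comm]
    congr 1
    have hmono : (monomial (xExp n m - Finsupp.single j 1)) ((1:ℝ) * (xExp n m j : ℝ))
        = (xExp n m j : ℝ) • monomial (xExp n m - Finsupp.single j 1) (1:ℝ) := by
      rw [smul_monomial, smul_eq_mul, mul_one, one_mul]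
    rw [hmono, smul_mul_assoc, smul_smul]
    rfl

end Aux3
section Aux4

variable {n : ℕ}

lemma pderiv_pderiv_comm {σ : Type*} [DecidableEq σ] (u v : σ) (f : MvPolynomial σ ℝ) :
    pderiv u (pderiv v f) = pderiv v (pderiv u f) := by
  rcases eq_or_ne u v with rfl | huv
  · rfl
  induction f using MvPolynomial.induction_on' with
  | add p q hp hq => rw [map_add, map_add, hp, hq, map_add, map_add]
  | monomial m r =>
    rw [pderiv_monomial, pderiv_monomial, pderiv_monomial, pderiv_monomial]
    have h1 : (m - Finsupp.single v 1 : σ →₀ ℕ) u = m u := by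
      simp [Finsupp.tsub_apply, Finsupp.single_apply, Ne.symm huv]
    have h2 : (m - Finsupp.single u 1 : σ →₀ ℕ) v = m v := by
      simp [Finsupp.tsub_apply, Finsupp.single_apply, huv]
    have he : m - Finsupp.single v 1 - Finsupp.single u 1
        = m - Finsupp.single u 1 - Finsupp.single v 1 := by
      rw [tsub_tsub, tsub_tsub, add_comm]
    rw [h1, h2, he]
    congr 1
    ring

lemma weight_eq_sum_inr (m : (Fin n ⊕ Fin n) →₀ ℕ) :
    Finsupp.weight (pwt n) m = ∑ j, m (Sum.inr j) := by
  rw [Finsupp.weight_apply, Finsupp.sum_fintype _ _ (fun u => by simp)]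
  rw [Fintype.sum_sum_type]
  simp [pwt]

lemma pVar_mul_dpOp_monomial (j : Fin n) (m : (Fin n ⊕ Fin n) →₀ ℕ) (r : ℝ) :
    pVar n j * dpOp n j (monomial m r) = ((m (Sum.inr j) : ℝ)) • monomial m r := by
  rw [dpOp_apply, pderiv_monomial, pVar, X_mul_monomial'']
  rcases eq_or_ne (m (Sum.inr j)) 0 with hz | hz
  · rw [hz]
    push_cast
    rw [mul_zero, zero_smul, map_zero]
  · have hm : Finsupp.single (Sum.inr j) 1 + (m - Finsupp.single (Sum.inr j) 1) = m := by
      ext a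
      simp only [Finsupp.add_apply, Finsupp.tsub_apply, Finsupp.single_apply]
      split_ifs with h
      · subst h; omega
      · omega
    rw [hm, smul_monomial]
    congr 1
    rw [smul_eq_mul]
    ring

lemma euler_p (P : PolySym n) {k : ℕ} (hP : IsPHomog n P k) :
    ∑ j, pVar n j * dpOp n j P = (k : ℝ) • P := by
  have hdecomp : P = ∑ m ∈ P.support, monomial m (P.coeff m) := P.as_sum
  have hmain : ∀ m ∈ P.support, ∑ j, pVar n j * dpOp n j (monomial m (P.coeff m))
      = (k : ℝ) • monomial m (P.coeff m) := by
    intro m hm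
    have hw : (∑ j, m (Sum.inr j)) = k := by
      rw [← weight_eq_sum_inr]
      exact hP (MvPolynomial.mem_support_iff.mp hm)
    calc ∑ j, pVar n j * dpOp n j (monomial m (P.coeff m))
        = ∑ j, ((m (Sum.inr j) : ℝ)) • monomial m (P.coeff m) :=
          Finset.sum_congr rfl fun j _ => pVar_mul_dpOp_monomial j m _
      _ = ((∑ j, m (Sum.inr j) : ℕ) : ℝ) • monomial m (P.coeff m) := by
          rw [← Finset.sum_smul]
          push_cast
          rfl
      _ = (k : ℝ) • monomial m (P.coeff m) := by rw [hw]
  conv_lhs => rw [hdecomp]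
  calc ∑ j, pVar n j * dpOp n j (∑ m ∈ P.support, monomial m (P.coeff m))
      = ∑ j, ∑ m ∈ P.support, pVar n j * dpOp n j (monomial m (P.coeff m)) := by
        refine Finset.sum_congr rfl fun j _ => ?_
        rw [map_sum, Finset.mul_sum]
    _ = ∑ m ∈ P.support, ∑ j, pVar n j * dpOp n j (monomial m (P.coeff m)) := Finset.sum_comm
    _ = ∑ m ∈ P.support, (k : ℝ) • monomial m (P.coeff m) := Finset.sum_congr rfl hmain
    _ = (k : ℝ) • P := by rw [← Finset.smul_sum, ← hdecomp]

lemma euler_p' (P : PolySym n) {k : ℕ} (hP : IsPHomog n P k) (i : Fin n) :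
    ∑ j, pVar n j * dpOp n j (dpOp n i P) = ((k : ℝ) - 1) • dpOp n i P := by
  have h := congrArg (dpOp n i) (euler_p P hP)
  rw [map_sum, map_smul] at h
  have hterm : ∀ j, dpOp n i (pVar n j * dpOp n j P)
      = (if j = i then dpOp n i P else 0) + pVar n j * dpOp n j (dpOp n i P) := by
    intro j
    show pderiv (Sum.inr i) (pVar n j * dpOp n j P) = _
    rw [pVar, pderiv_mul]
    congr 1
    · rcases eq_or_ne j i with rfl | hji
      · rw [pderiv_X_self, one_mul, if_pos rfl, dpOp_apply]
      · rw [pderiv_X_of_ne (fun h => hji (Sum.inr_injective h)), zero_mul, if_neg hji]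
    · show (X (Sum.inr j) : PolySym n) * pderiv (Sum.inr i) (pderiv (Sum.inr j) P)
          = X (Sum.inr j) * pderiv (Sum.inr j) (pderiv (Sum.inr i) P)
      rw [pderiv_pderiv_comm]
  rw [Finset.sum_congr rfl (fun j _ => hterm j), Finset.sum_add_distrib,
    Finset.sum_ite_eq' Finset.univ i (fun _ => dpOp n i P), if_pos (Finset.mem_univ i)] at h
  rw [sub_smul, one_smul]
  exact eq_sub_of_add_eq' h

lemma divVF_proj (i : Fin n) : divVF n (projVF n i) = ((n : ℕ) + 1) • (X i : PolyDen n) := by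
  rw [divVF]
  have hterm : ∀ j, pderiv j (projVF n i j) = (if j = i then X i else 0) + X i := by
    intro j
    rw [projVF]
    rw [pderiv_mul, pderiv_X_self, mul_one]
    congr 1
    rcases eq_or_ne j i with rfl | hji
    · rw [pderiv_X_self, one_mul, if_pos rfl]
    · rw [pderiv_X_of_ne (Ne.symm hji), zero_mul, if_neg hji]
  rw [Finset.sum_congr rfl (fun j _ => hterm j), Finset.sum_add_distrib,
    Finset.sum_ite_eq' Finset.univ i (fun _ => (X i : PolyDen n)), if_pos (Finset.mem_univ i),
    Finset.sum_const, Finset.card_univ, Fintype.card_fin, succ_nsmul']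

lemma dpOp_xVar_mul (j l : Fin n) (Q : PolySym n) :
    dpOp n j (xVar n l * Q) = xVar n l * dpOp n j Q := by
  rw [dpOp_apply, xVar, pderiv_mul, pderiv_X_of_ne (by simp), zero_mul, zero_add, dpOp_apply]

lemma liftX_mul (f g : PolyDen n) : liftX n (f * g) = liftX n f * liftX n g := by
  rw [liftX, liftX, liftX, map_mul]

lemma liftX_X (l : Fin n) : liftX n (X l) = xVar n l := by
  rw [liftX, rename_X, xVar]

end Aux4
section Aux5

variable {n : ℕ}

lemma pderivL_apply {σ : Type*} (u : σ) (g : MvPolynomial σ ℝ) :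
    (pderiv u).toLinearMap g = pderiv u g := rfl

lemma Nord_sub_left (A B : PolySym n) (f : PolyDen n) :
    Nord n (A - B) f = Nord n A f - Nord n B f :=
  map_sub (NordLM n f) A B

lemma Nord_sum_left {α : Type*} (s : Finset α) (F : α → PolySym n) (f : PolyDen n) :
    Nord n (∑ a ∈ s, F a) f = ∑ a ∈ s, Nord n (F a) f :=
  map_sum (NordLM n f) F s

lemma Nord_sum_right {α : Type*} (P : PolySym n) (s : Finset α) (F : α → PolyDen n) :
    Nord n P (∑ a ∈ s, F a) = ∑ a ∈ s, Nord n P (F a) :=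
  map_sum (NordRM n P) F s

lemma divVF_proj' (i : Fin n) :
    divVF n (projVF n i) = ((n : ℝ) + 1) • (X i : PolyDen n) := by
  rw [divVF_proj, ← Nat.cast_smul_eq_nsmul ℝ]
  push_cast
  rfl

lemma liftX_add (g h : PolyDen n) : liftX n (g + h) = liftX n g + liftX n h := by
  rw [liftX, liftX, liftX, map_add]

lemma liftX_one : liftX n (1 : PolyDen n) = 1 := by rw [liftX, map_one]

lemma liftX_zero : liftX n (0 : PolyDen n) = 0 := by rw [liftX, map_zero]

lemma liftX_smul (a : ℝ) (g : PolyDen n) : liftX n (a • g) = a • liftX n g := by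
  rw [liftX, liftX, map_smul]

lemma ellOp_apply_eq (lm : ℝ) (i : Fin n) (g : PolyDen n) :
    ellOp n lm (projVF n i) g
      = ∑ j, (X i * X j : PolyDen n) * pderiv j g + (lm * ((n : ℝ) + 1)) • (X i * g) := by
  rw [ellOp, LinearMap.add_apply, LinearMap.smul_apply, LinearMap.mulLeft_apply, divVF_proj',
    smul_mul_assoc, smul_smul, LinearMap.sum_apply]
  refine congrArg₂ (· + ·) (Finset.sum_congr rfl fun j _ => ?_) rfl
  rw [LinearMap.comp_apply, LinearMap.mulLeft_apply, pderivL_apply]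
  rfl

end Aux5

/-- For the projective inversion `X^i = x^ix^j∂_j`, the difference between the
adjoint action on differential operators from `λ`- to `μ`-densities (pulled back through the
normal ordering `N`) and the action `L^δ` on symbols of degree `k` equals
`ℓ_{k-1}(λ)·∂_{p_i}` with `ℓ_k(λ) = -(k + λ(n+1))` and `δ = μ - λ`; equivalently, for every
symbol `P` homogeneous of degree `k` in `p` and every function `f`,
`N(L^δ_X P + ℓ_{k-1}(λ) ∂_{p_i} P) f = ℓ^μ_X (N P f) - N P (ℓ^λ_X f)`. -/
theorem projective_adjoint_minus_symbol_action (n k : ℕ) (i : Fin n) (lam δ : ℝ)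
    (P : PolySym n) (hP : IsPHomog n P k) (f : PolyDen n) :
    Nord n (Lop n δ (projVF n i) P
        + (-(((k : ℝ) - 1) + lam * ((n : ℝ) + 1))) • dpOp n i P) f
      = ellOp n (lam + δ) (projVF n i) (Nord n P f)
        - Nord n P (ellOp n lam (projVF n i) f) := by
  classical
  set Q : PolySym n := xVar n i * P + dpOp n i P with hQ
  have hrhs1 : ellOp n (lam + δ) (projVF n i) (Nord n P f)
      = Nord n ((∑ j, xVar n i * (xVar n j * (pVar n j * P + dxOp n j P)))
          + ((lam + δ) * ((n : ℝ) + 1)) • (xVar n i * P)) f := by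
    rw [ellOp_apply_eq, Nord_add_left, Nord_smul_left, Nord_sum_left]
    refine congrArg₂ (· + ·) (Finset.sum_congr rfl fun j _ => ?_) ?_
    · rw [mul_assoc, pderiv_Nord, ← Nord_xVar_mul, ← Nord_xVar_mul]
    · rw [Nord_xVar_mul]
  have hrhs2 : Nord n P (ellOp n lam (projVF n i) f)
      = Nord n ((∑ j, pVar n j * (xVar n j * Q + dpOp n j Q))
          + (lam * ((n : ℝ) + 1)) • Q) f := by
    rw [ellOp_apply_eq, Nord_add_right, Nord_sum_right, Nord_smul_right,
      Nord_add_left, Nord_sum_left, Nord_smul_left]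
    refine congrArg₂ (· + ·) (Finset.sum_congr rfl fun j _ => ?_) ?_
    · rw [mul_assoc, Nord_X_mul_right, Nord_X_mul_right, Nord_pderiv_right, hQ]
    · rw [Nord_X_mul_right, hQ]
  rw [hrhs1, hrhs2, ← Nord_sub_left]
  refine congrArg (fun T => Nord n T f) ?_
  -- now a pure identity of symbols
  have hLopApp : Lop n δ (projVF n i) P
      = (∑ j, liftX n (projVF n i j) * dxOp n j P)
        - (∑ r, ∑ s, pVar n s * liftX n (pderiv r (projVF n i s)) * dpOp n r P)
        + δ • (liftX n (divVF n (projVF n i)) * P) := by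
    rw [Lop]
    simp only [LinearMap.add_apply, LinearMap.sub_apply, LinearMap.smul_apply,
      LinearMap.sum_apply, LinearMap.comp_apply, mulOp, LinearMap.mulLeft_apply]
  have h1 : (∑ j, liftX n (projVF n i j) * dxOp n j P)
      = ∑ j, xVar n i * (xVar n j * dxOp n j P) := by
    refine Finset.sum_congr rfl fun j _ => ?_
    show liftX n (X i * X j) * dxOp n j P = _
    rw [liftX_mul, liftX_X, liftX_X, mul_assoc]
  have h2 : (∑ r, ∑ s, pVar n s * liftX n (pderiv r (projVF n i s)) * dpOp n r P)
      = (∑ j, pVar n j * (xVar n j * dpOp n i P)) + (k : ℝ) • (xVar n i * P) := by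
    rw [Finset.sum_comm]
    have hs : ∀ s, (∑ r, pVar n s * liftX n (pderiv r (projVF n i s)) * dpOp n r P)
        = pVar n s * (xVar n s * dpOp n i P) + xVar n i * (pVar n s * dpOp n s P) := by
      intro s
      have hpd : ∀ r, liftX n (pderiv r (projVF n i s))
          = (if r = i then xVar n s else 0) + (if r = s then xVar n i else 0) := by
        intro r
        show liftX n (pderiv r (X i * X s)) = _
        rw [pderiv_mul, liftX_add, liftX_mul, liftX_mul]
        congr 1
        · rcases eq_or_ne r i with rfl | hri
          · rw [if_pos rfl, pderiv_X_self, liftX_one, one_mul, liftX_X]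
          · rw [if_neg hri, pderiv_X_of_ne (Ne.symm hri), liftX_zero, zero_mul]
        · rcases eq_or_ne r s with rfl | hrs
          · rw [if_pos rfl, pderiv_X_self, liftX_one, mul_one, liftX_X]
          · rw [if_neg hrs, pderiv_X_of_ne (Ne.symm hrs), liftX_zero, mul_zero]
      calc (∑ r, pVar n s * liftX n (pderiv r (projVF n i s)) * dpOp n r P)
          = ∑ r, ((if r = i then pVar n s * (xVar n s * dpOp n r P) else 0)
              + (if r = s then pVar n s * (xVar n i * dpOp n r P) else 0)) := by
            refine Finset.sum_congr rfl fun r _ => ?_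
            rw [hpd r, mul_add, add_mul]
            congr 1
            · split_ifs <;> simp [mul_assoc]
            · split_ifs <;> simp [mul_assoc]
        _ = pVar n s * (xVar n s * dpOp n i P) + pVar n s * (xVar n i * dpOp n s P) := by
            rw [Finset.sum_add_distrib, Finset.sum_ite_eq' Finset.univ i
                (fun r => pVar n s * (xVar n s * dpOp n r P)), if_pos (Finset.mem_univ i),
              Finset.sum_ite_eq' Finset.univ s
                (fun r => pVar n s * (xVar n i * dpOp n r P)), if_pos (Finset.mem_univ s)]
        _ = pVar n s * (xVar n s * dpOp n i P) + xVar n i * (pVar n s * dpOp n s P) := by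
            ring
    rw [Finset.sum_congr rfl fun s _ => hs s, Finset.sum_add_distrib]
    congr 1
    rw [← Finset.mul_sum, euler_p P hP, mul_smul_comm]
  have h3 : δ • (liftX n (divVF n (projVF n i)) * P) = (δ * ((n : ℝ) + 1)) • (xVar n i * P) := by
    rw [divVF_proj', liftX_smul, liftX_X, smul_mul_assoc, smul_smul]
  have h4 : (∑ j, pVar n j * (xVar n j * Q + dpOp n j Q))
      = (∑ j, pVar n j * (xVar n j * (xVar n i * P)))
        + (∑ j, pVar n j * (xVar n j * dpOp n i P))
        + (k : ℝ) • (xVar n i * P) + ((k : ℝ) - 1) • dpOp n i P := by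
    have hterm : ∀ j, pVar n j * (xVar n j * Q + dpOp n j Q)
        = pVar n j * (xVar n j * (xVar n i * P)) + pVar n j * (xVar n j * dpOp n i P)
          + xVar n i * (pVar n j * dpOp n j P) + pVar n j * dpOp n j (dpOp n i P) := by
      intro j
      rw [hQ, map_add (dpOp n j), dpOp_xVar_mul]
      ring
    rw [Finset.sum_congr rfl fun j _ => hterm j, Finset.sum_add_distrib, Finset.sum_add_distrib,
      Finset.sum_add_distrib, ← Finset.mul_sum, euler_p P hP, mul_smul_comm, euler_p' P hP i]
  have h5 : (∑ j, xVar n i * (xVar n j * (pVar n j * P + dxOp n j P)))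
      = (∑ j, pVar n j * (xVar n j * (xVar n i * P)))
        + (∑ j, xVar n i * (xVar n j * dxOp n j P)) := by
    rw [← Finset.sum_add_distrib]
    refine Finset.sum_congr rfl fun j _ => ?_
    rw [mul_add]
    ring
  rw [hLopApp, h1, h2, h3, h4, h5, hQ]
  module
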